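/- arXiv:1707.01811 — 3 statements merged into one kernel-verified Lean document; each statement's English description precedes it below -/
import Mathlib

section
/- Fix 0 < λ and let b, b₁, b₂, … be i.i.d. random variables taking values in (1-λ, 1) ∩ (0,1), with λ - 1 + b > 0 almost surely. For each integer k ≥ 1 define B_λ(k) = E[(λ+k)·b / (λ-1+b+∑_{i=1}^k bᵢ)]. Then B_λ(k+1) - B_λ(k) has the same strict sign as λ - 1: the sequence (B_λ(k)) is strictly decreasing if 0 < λ < 1, constant equal to 1 if λ = 1, and strictly increasing if λ > 1. -/
open MeasureTheory ProbabilityTheory Finset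

section aux

lemma sum_range_succ_split (m : ℕ) (f : ℕ → ℝ) :
    ∑ i ∈ range (m + 1), f i = f 0 + ∑ i ∈ Icc 1 m, f i := by
  have h : range (m + 1) = insert 0 (Icc 1 m) := by
    ext i; simp only [mem_range, mem_insert, mem_Icc]; omega
  rw [h, Finset.sum_insert (by simp)]

lemma joint_law {Ω : Type*} [MeasurableSpace Ω] (μ : Measure Ω) [IsProbabilityMeasure μ]
    (b : ℕ → Ω → ℝ) (hmeas : ∀ i, Measurable (b i))
    (hindep : iIndepFun b μ)
    (hident : ∀ i, IdentDistrib (b i) (b 0) μ μ) (n : ℕ) :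
    μ.map (fun ω (i : Fin n) => b i ω) = Measure.pi (fun _ : Fin n => μ.map (b 0)) := by
  have hXm : Measurable (fun ω (i : Fin n) => b i ω) :=
    measurable_pi_lambda _ (fun i => hmeas i)
  refine (Measure.pi_eq fun s hs => ?_).symm
  rw [Measure.map_apply hXm (MeasurableSet.univ_pi hs)]
  set s' : ℕ → Set ℝ := fun i => if h : i < n then s ⟨i, h⟩ else Set.univ with hs'
  have hpre : (fun ω (i : Fin n) => b i ω) ⁻¹' (Set.pi Set.univ s)
      = ⋂ i ∈ Finset.range n, b i ⁻¹' s' i := by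
    ext ω
    simp only [Set.mem_preimage, Set.mem_pi, Set.mem_univ, forall_true_left,
      Set.mem_iInter, mem_range]
    constructor
    · intro h i hi
      simp only [hs', dif_pos hi]
      exact h ⟨i, hi⟩
    · intro h i
      have := h i.val i.isLt
      simpa only [hs', dif_pos i.isLt, Fin.eta] using this
  rw [hpre, hindep.measure_inter_preimage_eq_mul (range n)
    (fun i _ => by simp only [hs']; split <;> [exact hs _; exact MeasurableSet.univ])]
  rw [← Fin.prod_univ_eq_prod_range (fun i => μ (b i ⁻¹' s' i)) n]
  refine Finset.prod_congr rfl fun i _ => ?_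
  have h1 : s' i.val = s i := by simp only [hs', dif_pos i.isLt, Fin.eta]
  rw [Measure.map_apply (hmeas 0) (hs i), h1, (hident i).measure_mem_eq (hs i)]

lemma perm_mp {n : ℕ} (ν : Measure ℝ) [IsProbabilityMeasure ν] (e : Equiv.Perm (Fin n)) :
    MeasurePreserving (fun x : Fin n → ℝ => fun i => x (e i))
      (Measure.pi fun _ => ν) (Measure.pi fun _ => ν) ∧
    MeasurableEmbedding (fun x : Fin n → ℝ => fun i => x (e i)) := by
  have hco : ⇑(MeasurableEquiv.piCongrLeft (fun _ : Fin n => ℝ) e.symm)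
      = fun x => fun i => x (e i) := by
    funext x j
    have h := MeasurableEquiv.piCongrLeft_apply_apply (β := fun _ : Fin n => ℝ) e.symm x (e j)
    simpa using h
  constructor
  · have h := MeasureTheory.measurePreserving_piCongrLeft (fun _ : Fin n => ν) e.symm
    rwa [hco] at h
  · have h := (MeasurableEquiv.piCongrLeft (fun _ : Fin n => ℝ) e.symm).measurableEmbedding
    rwa [hco] at h

lemma integral_pos_of_ae_pos {α : Type*} [MeasurableSpace α] (P : Measure α)
    [IsProbabilityMeasure P] {f : α → ℝ} (hf : Integrable f P)
    (h : ∀ᵐ x ∂P, 0 < f x) : 0 < ∫ x, f x ∂P := by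
  rw [integral_pos_iff_support_of_nonneg_ae (h.mono fun x hx => hx.le) hf]
  have hc : P (Function.support f)ᶜ = 0 := by
    refine measure_mono_null (fun x hx => ?_) (ae_iff.mp h)
    simp only [Set.mem_compl_iff, Function.mem_support, not_not] at hx
    simp [hx]
  by_contra hpos
  simp only [not_lt, le_zero_iff] at hpos
  have h3 : P Set.univ = 0 := by
    have h2 := measure_union_le (μ := P) (Function.support f) (Function.support f)ᶜ
    rw [Set.union_compl_self, hpos, hc] at h2
    simpa using h2
  simp [measure_univ] at h3

lemma core {k : ℕ} (hk : 1 ≤ k) (lam : ℝ) (hlam : 0 < lam)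
    (π : Measure (Fin (k + 2) → ℝ)) [IsProbabilityMeasure π]
    (S Dp F G fin : (Fin (k + 2) → ℝ) → ℝ)
    (hS : S = fun x => lam - 1 + ∑ i, x i)
    (hDp : Dp = fun x => S x - x (Fin.last (k + 1)))
    (hF : F = fun x => (lam + ((k : ℝ) + 1)) * x 0 / S x)
    (hG : G = fun x => (lam + (k : ℝ)) * x 0 / Dp x)
    (hfin : fin = fun x => (lam - 1) * (x (Fin.last (k + 1)) * (1 - x 0)) / (S x * Dp x))
    (hcoord : ∀ᵐ x ∂π, ∀ i, x i ∈ Set.Ioo (1 - lam) 1 ∩ Set.Ioo (0 : ℝ) 1)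
    (hperm : ∀ e : Equiv.Perm (Fin (k + 2)),
      MeasurePreserving (fun x : Fin (k + 2) → ℝ => fun i => x (e i)) π π ∧
      MeasurableEmbedding (fun x : Fin (k + 2) → ℝ => fun i => x (e i)))
    (hFi : Integrable F π) (hGi : Integrable G π) :
    (∫ x, F x ∂π - ∫ x, G x ∂π = ∫ x, fin x ∂π) ∧
    (lam = 1 → ∫ x, G x ∂π = 1) ∧
    (lam < 1 → ∫ x, fin x ∂π < 0) ∧ (1 < lam → 0 < ∫ x, fin x ∂π) := by
  have hkR : (0 : ℝ) ≤ (k : ℝ) := Nat.cast_nonneg k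
  have h0lst : (0 : Fin (k + 2)) ≠ Fin.last (k + 1) := by
    intro h
    have h2 := congrArg Fin.val h
    simp only [Fin.val_zero, Fin.val_last] at h2
    omega
  -- a.e. positivity facts
  have hae : ∀ᵐ x ∂π, (0 < S x ∧ 0 < Dp x) ∧ (∀ i, 0 < x i ∧ x i < 1) := by
    filter_upwards [hcoord] with x hx
    have hpos : ∀ i, 0 < x i := fun i => (hx i).2.1
    have h0 : 1 - lam < x 0 := (hx 0).1.1
    have hSsplit : S x = (lam - 1 + x 0) + ∑ i ∈ univ.erase 0, x i := by
      simp only [hS]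
      rw [← Finset.add_sum_erase univ x (mem_univ (0 : Fin (k + 2)))]
      ring
    have hnn : (0 : ℝ) ≤ ∑ i ∈ univ.erase (0 : Fin (k + 2)), x i :=
      Finset.sum_nonneg fun i _ => (hpos i).le
    have hDsplit : Dp x = (lam - 1 + x 0) +
        ∑ i ∈ (univ.erase (Fin.last (k + 1))).erase 0, x i := by
      simp only [hDp, hS]
      have h1 := Finset.sum_erase_add univ x (mem_univ (Fin.last (k + 1)))
      have h2 : ∑ i ∈ univ.erase (Fin.last (k + 1)), x i
          = x 0 + ∑ i ∈ (univ.erase (Fin.last (k + 1))).erase 0, x i := by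
        rw [Finset.add_sum_erase _ x (Finset.mem_erase.mpr ⟨h0lst, mem_univ _⟩)]
      linarith
    have hnn2 : (0 : ℝ) ≤ ∑ i ∈ (univ.erase (Fin.last (k + 1))).erase (0 : Fin (k + 2)), x i :=
      Finset.sum_nonneg fun i _ => (hpos i).le
    exact ⟨⟨by rw [hSsplit]; linarith, by rw [hDsplit]; linarith⟩,
      fun i => ⟨(hx i).2.1, (hx i).2.2⟩⟩
  have hcne : (lam + ((k : ℝ) + 1)) ≠ 0 := ne_of_gt (by linarith)
  have hcne' : (lam + (k : ℝ)) ≠ 0 := ne_of_gt (by linarith)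
  -- u_0, v_0 integrable
  have hu0 : Integrable (fun x => x 0 / S x) π := by
    have he : (fun x : Fin (k + 2) → ℝ => x 0 / S x)
        = fun x => F x / (lam + ((k : ℝ) + 1)) := by
      funext x; rw [hF]
      simp only
      rw [eq_div_iff hcne]
      ring
    rw [he]; exact hFi.div_const _
  have hv0 : Integrable (fun x => x 0 / Dp x) π := by
    have he : (fun x : Fin (k + 2) → ℝ => x 0 / Dp x)
        = fun x => G x / (lam + (k : ℝ)) := by
      funext x; rw [hG]
      simp only
      rw [eq_div_iff hcne']
      ring
    rw [he]; exact hGi.div_const _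
  -- exchangeability for u j
  have huj : ∀ j : Fin (k + 2), Integrable (fun x => x j / S x) π ∧
      ∫ x, x j / S x ∂π = ∫ x, x 0 / S x ∂π := by
    intro j
    obtain ⟨hmp, hemb⟩ := hperm (Equiv.swap 0 j)
    have h1 : ∀ x : Fin (k + 2) → ℝ, S (fun i => x (Equiv.swap 0 j i)) = S x := by
      intro x
      simp only [hS]
      congr 1
      exact Equiv.sum_comp (Equiv.swap 0 j) x
    have he : (fun x : Fin (k + 2) → ℝ => x j / S x)
        = fun x => (fun y : Fin (k + 2) → ℝ => y 0 / S y) (fun i => x (Equiv.swap 0 j i)) := by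
      funext x
      show x j / S x = x (Equiv.swap 0 j 0) / S (fun i => x (Equiv.swap 0 j i))
      rw [Equiv.swap_apply_left, h1]
    constructor
    · rw [he]
      exact (hmp.integrable_comp_emb hemb).mpr hu0
    · rw [he]
      exact hmp.integral_comp hemb (fun y : Fin (k + 2) → ℝ => y 0 / S y)
  -- exchangeability for v j, j ≠ last
  have hvj : ∀ j : Fin (k + 2), j ≠ Fin.last (k + 1) → Integrable (fun x => x j / Dp x) π ∧
      ∫ x, x j / Dp x ∂π = ∫ x, x 0 / Dp x ∂π := by
    intro j hj
    obtain ⟨hmp, hemb⟩ := hperm (Equiv.swap 0 j)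
    have h1 : ∀ x : Fin (k + 2) → ℝ, S (fun i => x (Equiv.swap 0 j i)) = S x := by
      intro x
      simp only [hS]
      congr 1
      exact Equiv.sum_comp (Equiv.swap 0 j) x
    have h2 : ∀ x : Fin (k + 2) → ℝ, Dp (fun i => x (Equiv.swap 0 j i)) = Dp x := by
      intro x
      simp only [hDp, h1]
      rw [Equiv.swap_apply_of_ne_of_ne (Ne.symm h0lst) (Ne.symm hj)]
    have he : (fun x : Fin (k + 2) → ℝ => x j / Dp x)
        = fun x => (fun y : Fin (k + 2) → ℝ => y 0 / Dp y) (fun i => x (Equiv.swap 0 j i)) := by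
      funext x
      show x j / Dp x = x (Equiv.swap 0 j 0) / Dp (fun i => x (Equiv.swap 0 j i))
      rw [Equiv.swap_apply_left, h2]
    constructor
    · rw [he]
      exact (hmp.integrable_comp_emb hemb).mpr hv0
    · rw [he]
      exact hmp.integral_comp hemb (fun y : Fin (k + 2) → ℝ => y 0 / Dp y)
  -- W functions
  set W : (Fin (k + 2) → ℝ) → ℝ := fun x => 1 - ∑ j, x j / S x with hWdef
  set W' : (Fin (k + 2) → ℝ) → ℝ :=
    fun x => 1 - ∑ j ∈ univ.erase (Fin.last (k + 1)), x j / Dp x with hW'def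
  have hWInt : Integrable W π :=
    (integrable_const 1).sub (integrable_finset_sum _ fun j _ => (huj j).1)
  have hW'Int : Integrable W' π :=
    (integrable_const 1).sub
      (integrable_finset_sum _ fun j hj => (hvj j (Finset.ne_of_mem_erase hj)).1)
  have hWae : ∀ᵐ x ∂π, W x = (lam - 1) / S x := by
    filter_upwards [hae] with x hx
    have hS0 : S x ≠ 0 := hx.1.1.ne'
    simp only [hWdef]
    rw [← Finset.sum_div]
    have h3 : ∑ i, x i = S x - (lam - 1) := by simp only [hS]; ring
    rw [h3]
    field_simp
    ring
  have hW'ae : ∀ᵐ x ∂π, W' x = (lam - 1) / Dp x := by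
    filter_upwards [hae] with x hx
    have hD0 : Dp x ≠ 0 := hx.1.2.ne'
    simp only [hW'def]
    rw [← Finset.sum_div]
    have h3 : ∑ i ∈ univ.erase (Fin.last (k + 1)), x i = Dp x - (lam - 1) := by
      have h4 := Finset.sum_erase_add univ x (mem_univ (Fin.last (k + 1)))
      simp only [hDp, hS]
      linarith
    rw [h3]
    field_simp
    ring
  have hWint_eq : ∫ x, W x ∂π = 1 - ((k : ℝ) + 2) * ∫ x, x 0 / S x ∂π := by
    simp only [hWdef]
    rw [integral_sub (integrable_const 1) (integrable_finset_sum _ fun j _ => (huj j).1)]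
    rw [integral_const]
    simp only [measure_univ, probReal_univ, ENNReal.toReal_one, smul_eq_mul, mul_one, one_mul]
    rw [integral_finset_sum _ fun j _ => (huj j).1]
    rw [Finset.sum_congr rfl fun j _ => (huj j).2, Finset.sum_const, card_univ,
      Fintype.card_fin, nsmul_eq_mul]
    push_cast
    ring
  have hW'int_eq : ∫ x, W' x ∂π = 1 - ((k : ℝ) + 1) * ∫ x, x 0 / Dp x ∂π := by
    simp only [hW'def]
    rw [integral_sub (integrable_const 1)
      (integrable_finset_sum _ fun j hj => (hvj j (Finset.ne_of_mem_erase hj)).1)]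
    rw [integral_const]
    simp only [measure_univ, probReal_univ, ENNReal.toReal_one, smul_eq_mul, mul_one, one_mul]
    rw [integral_finset_sum _ fun j hj => (hvj j (Finset.ne_of_mem_erase hj)).1]
    rw [Finset.sum_congr rfl fun j hj => (hvj j (Finset.ne_of_mem_erase hj)).2,
      Finset.sum_const, Finset.card_erase_of_mem (mem_univ _), card_univ,
      Fintype.card_fin, nsmul_eq_mul]
    push_cast
    ring
  -- main a.e. identity
  have hmain : ∀ᵐ x ∂π, fin x = F x - G x - (((k : ℝ) + 2) * (x 0 / S x) + W x)
      + (((k : ℝ) + 1) * (x 0 / Dp x) + W' x) := by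
    filter_upwards [hae, hWae, hW'ae] with x hx hw hw'
    have hS0 : S x ≠ 0 := hx.1.1.ne'
    have hD0 : Dp x ≠ 0 := hx.1.2.ne'
    rw [hw, hw']
    have hDS : Dp x = S x - x (Fin.last (k + 1)) := by simp only [hDp]
    simp only [hfin, hF, hG]
    rw [hDS] at hD0 ⊢
    field_simp
    ring
  have Iu : Integrable (fun x => ((k : ℝ) + 2) * (x 0 / S x)) π := hu0.const_mul _
  have Iv : Integrable (fun x => ((k : ℝ) + 1) * (x 0 / Dp x)) π := hv0.const_mul _
  have I1 : Integrable (fun x => ((k : ℝ) + 2) * (x 0 / S x) + W x) π := Iu.add hWInt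
  have I2 : Integrable (fun x => ((k : ℝ) + 1) * (x 0 / Dp x) + W' x) π := Iv.add hW'Int
  have I3 : Integrable (fun x => F x - G x) π := hFi.sub hGi
  have I5 : Integrable
      (fun x => F x - G x - (((k : ℝ) + 2) * (x 0 / S x) + W x)) π := I3.sub I1
  have hRHSInt : Integrable (fun x => F x - G x - (((k : ℝ) + 2) * (x 0 / S x) + W x)
      + (((k : ℝ) + 1) * (x 0 / Dp x) + W' x)) π := I5.add I2
  have hfinInt : Integrable fin π := hRHSInt.congr (hmain.mono fun x hx => hx.symm)
  have hIfin : ∫ x, fin x ∂π = ∫ x, F x ∂π - ∫ x, G x ∂π := by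
    rw [integral_congr_ae hmain]
    rw [integral_add I5 I2]
    rw [integral_sub I3 I1]
    rw [integral_sub hFi hGi]
    rw [integral_add Iu hWInt]
    rw [integral_add Iv hW'Int]
    rw [integral_const_mul, integral_const_mul, hWint_eq, hW'int_eq]
    ring
  refine ⟨hIfin.symm, ?_, ?_, ?_⟩
  · -- lam = 1
    intro h1
    have hGeq : ∫ x, G x ∂π = (lam + (k : ℝ)) * ∫ x, x 0 / Dp x ∂π := by
      simp only [hG]
      simp_rw [mul_div_assoc]
      exact integral_const_mul _ _
    have hW'0 : ∫ x, W' x ∂π = 0 := by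
      have hz : W' =ᵐ[π] fun _ => (0 : ℝ) := by
        filter_upwards [hW'ae] with x hx
        rw [hx, h1]; simp
      rw [integral_congr_ae hz, integral_zero]
    rw [hW'int_eq] at hW'0
    have hkne : ((k : ℝ) + 1) ≠ 0 := by positivity
    have hvval : ∫ x, x 0 / Dp x ∂π = 1 / ((k : ℝ) + 1) := by
      field_simp
      linarith
    rw [hGeq, hvval, h1, mul_one_div, div_eq_one_iff_eq hkne]
    ring
  · -- lam < 1
    intro hl
    have hneg : ∀ᵐ x ∂π, 0 < -fin x := by
      filter_upwards [hae] with x hx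
      have h1 : 0 < x (Fin.last (k + 1)) := (hx.2 _).1
      have h2 : x 0 < 1 := (hx.2 0).2
      have h3 : 0 < S x * Dp x := mul_pos hx.1.1 hx.1.2
      have h5 : 0 < x (Fin.last (k + 1)) * (1 - x 0) := mul_pos h1 (by linarith)
      have h6 : fin x < 0 := by
        rw [hfin]
        exact div_neg_of_neg_of_pos (mul_neg_of_neg_of_pos (by linarith) h5) h3
      linarith
    have hni : Integrable (fun x => -fin x) π := hfinInt.neg
    have hp := integral_pos_of_ae_pos π hni hneg
    rw [integral_neg] at hp
    linarith
  · -- 1 < lam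
    intro hl
    refine integral_pos_of_ae_pos π hfinInt ?_
    filter_upwards [hae] with x hx
    have h1 : 0 < x (Fin.last (k + 1)) := (hx.2 _).1
    have h2 : x 0 < 1 := (hx.2 0).2
    have h3 : 0 < S x * Dp x := mul_pos hx.1.1 hx.1.2
    have h5 : 0 < x (Fin.last (k + 1)) * (1 - x 0) := mul_pos h1 (by linarith)
    rw [hfin]
    exact div_pos (mul_pos (by linarith) h5) h3

end aux

theorem stmt_6 {Ω : Type*} [MeasurableSpace Ω] (μ : Measure Ω) [IsProbabilityMeasure μ]
    (lam : ℝ) (hlam : 0 < lam)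
    (b : ℕ → Ω → ℝ) (hmeas : ∀ i, Measurable (b i))
    (hval : ∀ i, ∀ᵐ ω ∂μ, b i ω ∈ Set.Ioo (1 - lam) 1 ∩ Set.Ioo (0 : ℝ) 1)
    (hpos : ∀ᵐ ω ∂μ, lam - 1 + b 0 ω > 0)
    (hindep : iIndepFun b μ)
    (hident : ∀ i, IdentDistrib (b i) (b 0) μ μ)
    (B : ℕ → ℝ)
    (hB : ∀ k, B k = ∫ ω, (lam + k) * b 0 ω /
      (lam - 1 + b 0 ω + ∑ i ∈ Icc 1 k, b i ω) ∂μ)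
    (hint : ∀ k, Integrable (fun ω => (lam + k) * b 0 ω /
      (lam - 1 + b 0 ω + ∑ i ∈ Icc 1 k, b i ω)) μ) :
    ∀ k : ℕ, 1 ≤ k →
      (lam < 1 → B (k + 1) < B k) ∧ (lam = 1 → B k = 1) ∧ (1 < lam → B k < B (k + 1)) := by
  intro k hk
  haveI hprob : IsProbabilityMeasure (μ.map (b 0)) :=
    Measure.isProbabilityMeasure_map (hmeas 0).aemeasurable
  have hXm : Measurable (fun ω (i : Fin (k + 2)) => b i ω) :=
    measurable_pi_lambda _ fun i => hmeas i
  have hX : μ.map (fun ω (i : Fin (k + 2)) => b i ω)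
      = Measure.pi (fun _ : Fin (k + 2) => μ.map (b 0)) :=
    joint_law μ b hmeas hindep hident (k + 2)
  have hsum : ∀ ω, (∑ i : Fin (k + 2), b i ω) = b 0 ω + ∑ i ∈ Icc 1 (k + 1), b i ω := by
    intro ω
    rw [Fin.sum_univ_eq_sum_range (fun i => b i ω) (k + 2)]
    exact sum_range_succ_split (k + 1) _
  -- measurability of the integrands on the product space
  have hSm : Measurable (fun x : Fin (k + 2) → ℝ => lam - 1 + ∑ i, x i) :=
    measurable_const.add (Finset.measurable_sum _ fun i _ => measurable_pi_apply i)
  have hDm : Measurable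
      (fun x : Fin (k + 2) → ℝ => lam - 1 + ∑ i, x i - x (Fin.last (k + 1))) :=
    hSm.sub (measurable_pi_apply _)
  have hFm : Measurable (fun x : Fin (k + 2) → ℝ =>
      (lam + ((k : ℝ) + 1)) * x 0 / (lam - 1 + ∑ i, x i)) :=
    (measurable_const.mul (measurable_pi_apply 0)).div hSm
  have hGm : Measurable (fun x : Fin (k + 2) → ℝ =>
      (lam + (k : ℝ)) * x 0 / (lam - 1 + ∑ i, x i - x (Fin.last (k + 1)))) :=
    (measurable_const.mul (measurable_pi_apply 0)).div hDm
  -- composition identities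
  have hFcomp : (fun ω => (fun x : Fin (k + 2) → ℝ =>
        (lam + ((k : ℝ) + 1)) * x 0 / (lam - 1 + ∑ i, x i)) ((fun ω (i : Fin (k + 2)) => b i ω) ω))
      = fun ω => (lam + ((k + 1 : ℕ) : ℝ)) * b 0 ω /
        (lam - 1 + b 0 ω + ∑ i ∈ Icc 1 (k + 1), b i ω) := by
    funext ω
    simp only [Fin.val_zero]
    rw [hsum ω, ← add_assoc]
    push_cast
    ring
  have hGcomp : (fun ω => (fun x : Fin (k + 2) → ℝ =>
        (lam + (k : ℝ)) * x 0 / (lam - 1 + ∑ i, x i - x (Fin.last (k + 1))))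
        ((fun ω (i : Fin (k + 2)) => b i ω) ω))
      = fun ω => (lam + (k : ℕ)) * b 0 ω /
        (lam - 1 + b 0 ω + ∑ i ∈ Icc 1 k, b i ω) := by
    funext ω
    simp only [Fin.val_zero, Fin.val_last]
    rw [hsum ω, Finset.sum_Icc_succ_top (by omega : 1 ≤ k + 1)]
    push_cast
    ring_nf
  -- integrability
  have hFi : Integrable (fun x : Fin (k + 2) → ℝ =>
      (lam + ((k : ℝ) + 1)) * x 0 / (lam - 1 + ∑ i, x i))
      (Measure.pi (fun _ : Fin (k + 2) => μ.map (b 0))) := by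
    rw [← hX]
    refine (integrable_map_measure hFm.aestronglyMeasurable hXm.aemeasurable).mpr ?_
    show Integrable (fun ω => (fun x : Fin (k + 2) → ℝ =>
      (lam + ((k : ℝ) + 1)) * x 0 / (lam - 1 + ∑ i, x i)) ((fun ω (i : Fin (k + 2)) => b i ω) ω)) μ
    rw [hFcomp]
    exact hint (k + 1)
  have hGi : Integrable (fun x : Fin (k + 2) → ℝ =>
      (lam + (k : ℝ)) * x 0 / (lam - 1 + ∑ i, x i - x (Fin.last (k + 1))))
      (Measure.pi (fun _ : Fin (k + 2) => μ.map (b 0))) := by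
    rw [← hX]
    refine (integrable_map_measure hGm.aestronglyMeasurable hXm.aemeasurable).mpr ?_
    show Integrable (fun ω => (fun x : Fin (k + 2) → ℝ =>
      (lam + (k : ℝ)) * x 0 / (lam - 1 + ∑ i, x i - x (Fin.last (k + 1))))
      ((fun ω (i : Fin (k + 2)) => b i ω) ω)) μ
    rw [hGcomp]
    exact hint k
  -- B values as integrals over the product space
  have hBk1 : B (k + 1) = ∫ x, (lam + ((k : ℝ) + 1)) * x 0 / (lam - 1 + ∑ i, x i)
      ∂(Measure.pi (fun _ : Fin (k + 2) => μ.map (b 0))) := by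
    rw [hB (k + 1), ← hX, integral_map hXm.aemeasurable hFm.aestronglyMeasurable]
    rw [show (fun ω => (fun x : Fin (k + 2) → ℝ =>
        (lam + ((k : ℝ) + 1)) * x 0 / (lam - 1 + ∑ i, x i)) ((fun ω (i : Fin (k + 2)) => b i ω) ω))
      = _ from hFcomp]
  have hBk : B k = ∫ x, (lam + (k : ℝ)) * x 0 / (lam - 1 + ∑ i, x i - x (Fin.last (k + 1)))
      ∂(Measure.pi (fun _ : Fin (k + 2) => μ.map (b 0))) := by
    rw [hB k, ← hX, integral_map hXm.aemeasurable hGm.aestronglyMeasurable]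
    rw [show (fun ω => (fun x : Fin (k + 2) → ℝ =>
        (lam + (k : ℝ)) * x 0 / (lam - 1 + ∑ i, x i - x (Fin.last (k + 1))))
        ((fun ω (i : Fin (k + 2)) => b i ω) ω)) = _ from hGcomp]
  -- a.e. coordinate bounds under the product measure
  have hA : MeasurableSet (Set.Ioo (1 - lam) 1 ∩ Set.Ioo (0 : ℝ) 1) :=
    measurableSet_Ioo.inter measurableSet_Ioo
  have hsetm : MeasurableSet {x : Fin (k + 2) → ℝ |
      ∀ i, x i ∈ Set.Ioo (1 - lam) 1 ∩ Set.Ioo (0 : ℝ) 1} := by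
    have hEq : {x : Fin (k + 2) → ℝ | ∀ i, x i ∈ Set.Ioo (1 - lam) 1 ∩ Set.Ioo (0 : ℝ) 1}
        = ⋂ i, (fun x : Fin (k + 2) → ℝ => x i) ⁻¹'
          (Set.Ioo (1 - lam) 1 ∩ Set.Ioo (0 : ℝ) 1) := by
      ext x; simp [Set.mem_iInter]
    rw [hEq]
    exact MeasurableSet.iInter fun i => (measurable_pi_apply i) hA
  have hcoord : ∀ᵐ x ∂(Measure.pi (fun _ : Fin (k + 2) => μ.map (b 0))),
      ∀ i : Fin (k + 2), x i ∈ Set.Ioo (1 - lam) 1 ∩ Set.Ioo (0 : ℝ) 1 := by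
    rw [← hX, ae_map_iff hXm.aemeasurable hsetm]
    exact ae_all_iff.2 fun i => hval i
  obtain ⟨hdiff, hlam1, hneg, hpos'⟩ := core hk lam hlam
    (Measure.pi (fun _ : Fin (k + 2) => μ.map (b 0)))
    (fun x => lam - 1 + ∑ i, x i)
    (fun x => lam - 1 + ∑ i, x i - x (Fin.last (k + 1)))
    (fun x => (lam + ((k : ℝ) + 1)) * x 0 / (lam - 1 + ∑ i, x i))
    (fun x => (lam + (k : ℝ)) * x 0 / (lam - 1 + ∑ i, x i - x (Fin.last (k + 1))))
    (fun x => (lam - 1) * (x (Fin.last (k + 1)) * (1 - x 0)) /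
      ((lam - 1 + ∑ i, x i) * (lam - 1 + ∑ i, x i - x (Fin.last (k + 1)))))
    rfl rfl rfl rfl rfl hcoord (fun e => perm_mp (μ.map (b 0)) e) hFi hGi
  have hBdiff : B (k + 1) - B k = ∫ x, (lam - 1) * (x (Fin.last (k + 1)) * (1 - x 0)) /
      ((lam - 1 + ∑ i, x i) * (lam - 1 + ∑ i, x i - x (Fin.last (k + 1))))
      ∂(Measure.pi (fun _ : Fin (k + 2) => μ.map (b 0))) := by
    rw [hBk1, hBk]; exact hdiff
  refine ⟨fun h => ?_, fun h => ?_, fun h => ?_⟩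
  · have := hneg h; linarith
  · rw [hBk]; exact hlam1 h
  · have := hpos' h; linarith
end

section
/- Let ν be a non-degenerate positive-integer-valued random variable with finite mean, and let A : ℕ → ℝ be such that A is strictly increasing and k ↦ A(k)/k is strictly decreasing. Let ν̂ have the size-biased distribution of ν, i.e., P(ν̂ = k) = k·P(ν = k)/E[ν]. Then E[A(ν̂)] < E[ν̂]·E[A(ν̂)/ν̂] (assuming all expectations are finite). -/
open MeasureTheory

theorem stmt_9 {Ω Ω' : Type*} [MeasurableSpace Ω] [MeasurableSpace Ω']
    (μ : Measure Ω) [IsProbabilityMeasure μ] (μ' : Measure Ω') [IsProbabilityMeasure μ']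
    (ν : Ω → ℕ) (hmeas : Measurable ν) (hpos : ∀ ω, 1 ≤ ν ω)
    (hnondeg : ¬ ∃ c : ℕ, ∀ᵐ ω ∂μ, ν ω = c)
    (hint : Integrable (fun ω => (ν ω : ℝ)) μ)
    (ν' : Ω' → ℕ) (hmeas' : Measurable ν')
    (hsb : ∀ k : ℕ, (μ' {ω | ν' ω = k}).toReal
      = k * (μ {ω | ν ω = k}).toReal / ∫ ω, (ν ω : ℝ) ∂μ)
    (A : ℕ → ℝ) (hA : StrictMono A)
    (hAdec : ∀ j k : ℕ, 1 ≤ j → j < k → A k / k < A j / j)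
    (hint1 : Integrable (fun ω => A (ν' ω)) μ')
    (hint2 : Integrable (fun ω => (ν' ω : ℝ)) μ')
    (hint3 : Integrable (fun ω => A (ν' ω) / (ν' ω : ℝ)) μ') :
    ∫ ω, A (ν' ω) ∂μ' < (∫ ω, (ν' ω : ℝ) ∂μ') * ∫ ω, A (ν' ω) / (ν' ω : ℝ) ∂μ' := by
  -- Basic facts about the mean of ν
  have hE1 : (1 : ℝ) ≤ ∫ ω, (ν ω : ℝ) ∂μ := by
    have := integral_mono (integrable_const (1 : ℝ)) hint
      (fun ω => by simpa using hpos ω)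
    simpa using this
  have hEpos : (0 : ℝ) < ∫ ω, (ν ω : ℝ) ∂μ := lt_of_lt_of_le one_pos hE1
  -- ν takes at least two values with positive probability
  have hatom : ∃ j k : ℕ, 1 ≤ j ∧ j < k ∧ μ {ω | ν ω = j} ≠ 0 ∧ μ {ω | ν ω = k} ≠ 0 := by
    -- there is at least one atom
    have hex : ∃ k, μ {ω | ν ω = k} ≠ 0 := by
      by_contra h
      push_neg at h
      have : μ (⋃ k, {ω | ν ω = k}) = 0 := measure_iUnion_null h
      have huniv : (Set.univ : Set Ω) ⊆ ⋃ k, {ω | ν ω = k} := fun ω _ =>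
        Set.mem_iUnion.2 ⟨ν ω, rfl⟩
      have := measure_mono_null huniv this
      simp at this
    obtain ⟨k₀, hk₀⟩ := hex
    have hex2 : ∃ k₁, k₁ ≠ k₀ ∧ μ {ω | ν ω = k₁} ≠ 0 := by
      by_contra h
      push_neg at h
      apply hnondeg
      refine ⟨k₀, ?_⟩
      have : μ (⋃ k, if k = k₀ then (∅ : Set Ω) else {ω | ν ω = k}) = 0 := by
        apply measure_iUnion_null
        intro k
        by_cases hk : k = k₀
        · simp [hk]
        · simpa [hk] using h k hk
      have hsub : {ω | ν ω ≠ k₀} ⊆ ⋃ k, if k = k₀ then (∅ : Set Ω) else {ω | ν ω = k} := by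
        intro ω hω
        refine Set.mem_iUnion.2 ⟨ν ω, ?_⟩
        simp only [Set.mem_setOf_eq] at hω
        simp [hω]
      have := measure_mono_null hsub this
      exact this
    obtain ⟨k₁, hne, hk₁⟩ := hex2
    have hge : ∀ m : ℕ, μ {ω | ν ω = m} ≠ 0 → 1 ≤ m := by
      intro m hm
      by_contra hm1
      push_neg at hm1
      interval_cases m
      have hempty : {ω | ν ω = 0} = ∅ := by
        ext ω
        simp only [Set.mem_setOf_eq, Set.mem_empty_iff_false, iff_false]
        have := hpos ω
        omega
      rw [hempty] at hm
      simp at hm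
    rcases lt_or_gt_of_ne hne with h | h
    · exact ⟨k₁, k₀, hge k₁ hk₁, h, hk₁, hk₀⟩
    · exact ⟨k₀, k₁, hge k₀ hk₀, h, hk₀, hk₁⟩
  obtain ⟨j, k, hj1, hjk, hμj, hμk⟩ := hatom
  -- positivity of the size-biased atoms
  have hatom' : ∀ m : ℕ, 1 ≤ m → μ {ω | ν ω = m} ≠ 0 → μ' {ω | ν' ω = m} ≠ 0 := by
    intro m hm hμm
    have hfin : μ {ω | ν ω = m} ≠ ⊤ := measure_ne_top μ _
    have hpos' : 0 < (μ {ω | ν ω = m}).toReal := ENNReal.toReal_pos hμm hfin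
    have : 0 < (μ' {ω | ν' ω = m}).toReal := by
      rw [hsb m]
      positivity
    intro h0
    rw [h0] at this
    simp at this
  have hν'j : μ' {ω | ν' ω = j} ≠ 0 := hatom' j hj1 hμj
  have hν'k : μ' {ω | ν' ω = k} ≠ 0 := hatom' k (le_trans hj1 (le_of_lt hjk)) hμk
  -- ν' ≥ 1 a.e.
  have hzero : μ' {ω | ν' ω = 0} = 0 := by
    have h := hsb 0
    simp only [Nat.cast_zero, zero_mul, zero_div] at h
    exact (ENNReal.toReal_eq_zero_iff _).1 h |>.resolve_right (measure_ne_top μ' _)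
  have hae1 : ∀ᵐ ω ∂μ', 1 ≤ ν' ω := by
    rw [ae_iff]
    have : {ω | ¬ 1 ≤ ν' ω} = {ω | ν' ω = 0} := by
      ext ω
      simp only [Set.mem_setOf_eq, not_le, Nat.lt_one_iff]
    rw [this]; exact hzero
  -- definitions
  set g : ℕ → ℝ := fun m => A m / m with hg
  set f' : Ω' → ℝ := fun ω => (ν' ω : ℝ) with hf'
  set g' : Ω' → ℝ := fun ω => g (ν' ω) with hg'
  have hfgae : (fun ω => f' ω * g' ω) =ᵐ[μ'] fun ω => A (ν' ω) := by
    filter_upwards [hae1] with ω hω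
    have hne0 : (ν' ω : ℝ) ≠ 0 := by exact_mod_cast Nat.one_le_iff_ne_zero.1 hω
    show (ν' ω : ℝ) * (A (ν' ω) / (ν' ω : ℝ)) = A (ν' ω)
    rw [mul_comm, div_mul_cancel₀ _ hne0]
  have hintfg : Integrable (fun ω => f' ω * g' ω) μ' := hint1.congr hfgae.symm
  -- product measure
  set P : Measure (Ω' × Ω') := μ'.prod μ' with hP
  have hI1 : Integrable (fun p : Ω' × Ω' => f' p.1 * g' p.2) P := hint2.mul_prod hint3
  have hI2 : Integrable (fun p : Ω' × Ω' => g' p.1 * f' p.2) P := hint3.mul_prod hint2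
  have hI3 : Integrable (fun p : Ω' × Ω' => (f' p.1 * g' p.1) * (1 : ℝ)) P :=
    hintfg.mul_prod (integrable_const 1)
  have hI4 : Integrable (fun p : Ω' × Ω' => (1 : ℝ) * (f' p.2 * g' p.2)) P :=
    (integrable_const (1 : ℝ)).mul_prod hintfg
  -- F ≤ indicator a.e. and conclusion ∫ F < 0
  set F : Ω' × Ω' → ℝ := fun p => (f' p.1 - f' p.2) * (g' p.1 - g' p.2) with hF
  have hIF : Integrable F P := by
    have : F = fun p => (f' p.1 * g' p.1) * 1 - f' p.1 * g' p.2 - g' p.1 * f' p.2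
        + 1 * (f' p.2 * g' p.2) := by
      funext p; simp [hF]; ring
    rw [this]
    exact ((hI3.sub hI1).sub hI2).add hI4
  -- g is antitone on [1, ∞)
  have hganti : ∀ a b : ℕ, 1 ≤ a → a ≤ b → g b ≤ g a := by
    intro a b ha hab
    rcases eq_or_lt_of_le hab with h | h
    · rw [h]
    · exact le_of_lt (hAdec a b ha h)
  -- a.e. both coordinates ≥ 1
  have hnull1 : P {p : Ω' × Ω' | ν' p.1 = 0} = 0 := by
    have he : {p : Ω' × Ω' | ν' p.1 = 0} = {ω | ν' ω = 0} ×ˢ (Set.univ : Set Ω') := by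
      ext p; simp [Set.mem_prod]
    rw [he, hP, Measure.prod_prod, hzero, zero_mul]
  have hnull2 : P {p : Ω' × Ω' | ν' p.2 = 0} = 0 := by
    have he : {p : Ω' × Ω' | ν' p.2 = 0} = (Set.univ : Set Ω') ×ˢ {ω | ν' ω = 0} := by
      ext p; simp [Set.mem_prod]
    rw [he, hP, Measure.prod_prod, hzero, mul_zero]
  have haeP : ∀ᵐ p ∂P, 1 ≤ ν' p.1 ∧ 1 ≤ ν' p.2 := by
    rw [ae_iff]
    refine measure_mono_null ?_ (measure_union_null hnull1 hnull2)
    · intro p hp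
      simp only [Set.mem_setOf_eq, not_and_or, not_le] at hp
      rcases hp with h | h
      · exact Or.inl (by simp only [Set.mem_setOf_eq]; omega)
      · exact Or.inr (by simp only [Set.mem_setOf_eq]; omega)
  -- the bad rectangle
  set S : Set (Ω' × Ω') := {ω | ν' ω = j} ×ˢ {ω | ν' ω = k} with hS
  have hSmeas : MeasurableSet S :=
    (hmeas' (measurableSet_singleton j)).prod (hmeas' (measurableSet_singleton k))
  have hSpos : P S ≠ 0 := by
    rw [hS, hP, Measure.prod_prod]
    exact mul_ne_zero hν'j hν'k
  set c : ℝ := ((j : ℝ) - k) * (g j - g k) with hc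
  have hcneg : c < 0 := by
    apply mul_neg_of_neg_of_pos
    · have : (j : ℝ) < k := by exact_mod_cast hjk
      linarith
    · have := hAdec j k hj1 hjk
      simp only [hg]
      linarith
  have hFle : ∀ᵐ p ∂P, F p ≤ S.indicator (fun _ => c) p := by
    filter_upwards [haeP] with p hp
    by_cases hpS : p ∈ S
    · rw [Set.indicator_of_mem hpS]
      obtain ⟨hp1, hp2⟩ := hpS
      simp only [Set.mem_setOf_eq] at hp1 hp2
      simp [hF, hf', hg', hp1, hp2, hc]
    · rw [Set.indicator_of_notMem hpS]
      rcases le_total (ν' p.1) (ν' p.2) with h | h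
      · apply mul_nonpos_of_nonpos_of_nonneg
        · simp only [hf', sub_nonpos]; exact_mod_cast h
        · simp only [hg', sub_nonneg]; exact hganti _ _ hp.1 h
      · apply mul_nonpos_of_nonneg_of_nonpos
        · simp only [hf', sub_nonneg]; exact_mod_cast h
        · simp only [hg', sub_nonpos]; exact hganti _ _ hp.2 h
  have hintInd : Integrable (S.indicator fun _ => c) P :=
    (integrable_const c).indicator hSmeas
  have hFneg : ∫ p, F p ∂P < 0 := by
    have h1 : ∫ p, F p ∂P ≤ ∫ p, S.indicator (fun _ => c) p ∂P :=
      integral_mono_ae hIF hintInd hFle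
    have h2 : ∫ p, S.indicator (fun _ => c) p ∂P = (P S).toReal • c :=
      integral_indicator_const c hSmeas
    have h3 : (P S).toReal • c < 0 := by
      have : 0 < (P S).toReal := ENNReal.toReal_pos hSpos (measure_ne_top P S)
      rw [smul_eq_mul]
      exact mul_neg_of_pos_of_neg this hcneg
    linarith
  -- expand ∫ F
  have hexp : ∫ p, F p ∂P
      = 2 * (∫ ω, f' ω * g' ω ∂μ' - (∫ ω, f' ω ∂μ') * ∫ ω, g' ω ∂μ') := by
    have e : F = fun p => (f' p.1 * g' p.1) * 1 - f' p.1 * g' p.2 - g' p.1 * f' p.2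
        + 1 * (f' p.2 * g' p.2) := by
      funext p; simp [hF]; ring
    have estep : ∫ p, F p ∂P = ∫ p, (f' p.1 * g' p.1 * 1 - f' p.1 * g' p.2
        - g' p.1 * f' p.2 + 1 * (f' p.2 * g' p.2)) ∂P :=
      integral_congr_ae (ae_of_all _ fun p => by simp only [hF]; ring)
    have hI31 : Integrable (fun p : Ω' × Ω' => f' p.1 * g' p.1 * 1 - f' p.1 * g' p.2) P :=
      hI3.sub hI1
    have hI312 : Integrable (fun p : Ω' × Ω' =>
        f' p.1 * g' p.1 * 1 - f' p.1 * g' p.2 - g' p.1 * f' p.2) P := hI31.sub hI2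
    rw [estep]
    rw [integral_add hI312 hI4, integral_sub hI31 hI2, integral_sub hI3 hI1]
    rw [integral_prod_mul (fun ω => f' ω * g' ω) (fun _ => (1:ℝ)),
      integral_prod_mul f' g', integral_prod_mul g' f',
      integral_prod_mul (fun _ => (1:ℝ)) (fun ω => f' ω * g' ω)]
    simp [measure_univ]
    ring
  rw [hexp] at hFneg
  have key : ∫ ω, f' ω * g' ω ∂μ' < (∫ ω, f' ω ∂μ') * ∫ ω, g' ω ∂μ' := by linarith
  calc ∫ ω, A (ν' ω) ∂μ' = ∫ ω, f' ω * g' ω ∂μ' := (integral_congr_ae hfgae).symm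
    _ < (∫ ω, f' ω ∂μ') * ∫ ω, g' ω ∂μ' := key
    _ = (∫ ω, (ν' ω : ℝ) ∂μ') * ∫ ω, A (ν' ω) / (ν' ω : ℝ) ∂μ' := rfl
end

section
/- Let 0 < λ and suppose b, b₁, b₂, …, are i.i.d. (0,1)-valued random variables with λ-1+b > 0 a.s., and let ν be an independent positive-integer-valued random variable with finite mean m. Then E[(λ+ν)·b/(λ-1+b+∑_{i=1}^ν bᵢ)] < λ + m. -/
open MeasureTheory ProbabilityTheory Finset

theorem stmt_12 {Ω : Type*} [MeasurableSpace Ω] (μ : Measure Ω) [IsProbabilityMeasure μ]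
    (lam : ℝ) (hlam : 0 < lam)
    (b : ℕ → Ω → ℝ) (hmeas : ∀ i, Measurable (b i))
    (hval : ∀ i, ∀ᵐ ω ∂μ, b i ω ∈ Set.Ioo (0 : ℝ) 1)
    (hpos : ∀ᵐ ω ∂μ, lam - 1 + b 0 ω > 0)
    (hindep : iIndepFun b μ)
    (hident : ∀ i, IdentDistrib (b i) (b 0) μ μ)
    (ν : Ω → ℕ) (hν : Measurable ν) (hν1 : ∀ ω, 1 ≤ ν ω)
    (hνindep : ∀ i, IndepFun ν (b i) μ)
    (m : ℝ) (hm : m = ∫ ω, (ν ω : ℝ) ∂μ)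
    (hνint : Integrable (fun ω => (ν ω : ℝ)) μ)
    (hdenpos : ∀ᵐ ω ∂μ, lam - 1 + ∑ i ∈ Icc 1 (ν ω), b i ω > 0)
    (hint : Integrable (fun ω => (lam + ν ω) * b 0 ω /
      (lam - 1 + b 0 ω + ∑ i ∈ Icc 1 (ν ω), b i ω)) μ) :
    ∫ ω, (lam + ν ω) * b 0 ω /
      (lam - 1 + b 0 ω + ∑ i ∈ Icc 1 (ν ω), b i ω) ∂μ < lam + m := by
  set f : Ω → ℝ := fun ω => (lam + ν ω) * b 0 ω /
      (lam - 1 + b 0 ω + ∑ i ∈ Icc 1 (ν ω), b i ω) with hf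
  have hg : Integrable (fun ω => lam + (ν ω : ℝ)) μ := (integrable_const lam).add hνint
  have hae : ∀ᵐ ω ∂μ, f ω < lam + (ν ω : ℝ) := by
    filter_upwards [hval 0, hdenpos] with ω h0 hd
    have hb0 : 0 < b 0 ω := h0.1
    have hD : 0 < lam - 1 + b 0 ω + ∑ i ∈ Icc 1 (ν ω), b i ω := by linarith
    have hνp : (0:ℝ) < lam + ν ω := by positivity
    rw [hf]
    rw [div_lt_iff₀ hD]
    nlinarith
  have hsub : Integrable (fun ω => lam + (ν ω : ℝ) - f ω) μ := hg.sub hint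
  have h1 : 0 < ∫ ω, (lam + (ν ω : ℝ) - f ω) ∂μ := by
    rw [integral_pos_iff_support_of_nonneg_ae]
    · have hmem : ∀ᵐ ω ∂μ, ω ∈ Function.support (fun ω => lam + (ν ω : ℝ) - f ω) := by
        filter_upwards [hae] with ω h
        simp only [Function.mem_support]
        intro hz
        nlinarith
      have hc : μ (Function.support (fun ω => lam + (ν ω : ℝ) - f ω))ᶜ = 0 := by
        have := ae_iff.mp hmem
        simpa [Set.compl_def] using this
      have := measure_union_le (μ := μ)
        (Function.support (fun ω => lam + (ν ω : ℝ) - f ω))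
        (Function.support (fun ω => lam + (ν ω : ℝ) - f ω))ᶜ
      rw [Set.union_compl_self, measure_univ, hc, add_zero] at this
      exact lt_of_lt_of_le one_pos this
    · filter_upwards [hae] with ω h
      simp only [Pi.zero_apply]
      linarith
    · exact hsub
  rw [integral_sub hg hint] at h1
  have hgval : ∫ ω, (lam + (ν ω : ℝ)) ∂μ = lam + m := by
    rw [integral_add (integrable_const lam) hνint, integral_const, probReal_univ, hm]
    simp
  linarith
end
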